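/- Let τ > 0 and let f : (0,∞) → [0,∞) be a measurable probability density with cumulative distribution function F(u) = ∫_0^u f(c) dc, and assume F(u) > 0 for every u ∈ (0, τ). Then the function c ↦ (1/τ) f(c) ∫_c^τ (1/F(u)) du on (0, τ) is itself a probability density, i.e., ∫_0^τ (1/τ) f(c) ( ∫_c^τ 1/F(u) du ) dc = 1. -/

import Mathlib

open MeasureTheory intervalIntegral
open scoped ENNReal

/-- The density of `C^short` integrates to one: if `f` is a probability density on
`(0, ∞)` with CDF `F u = ∫_0^u f`, and `F u > 0` on `(0, τ)`, then
`c ↦ (1/τ) f(c) ∫_c^τ (1/F(u)) du` is a probability density on `(0, τ)`. -/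
theorem stmt_16 (τ : ℝ) (hτ : 0 < τ)
    (f : ℝ → ℝ) (hfmeas : Measurable f) (hfnonneg : ∀ x, 0 ≤ f x)
    (hfdens : ∫ x in Set.Ioi (0 : ℝ), f x = 1)
    (F : ℝ → ℝ) (hF : ∀ u, F u = ∫ t in (0 : ℝ)..u, f t)
    (hFpos : ∀ u ∈ Set.Ioo (0 : ℝ) τ, 0 < F u) :
    ∫ c in Set.Ioo (0 : ℝ) τ, (1 / τ) * f c * (∫ u in Set.Ioo c τ, 1 / F u) = 1 := by
  classical
  -- f is integrable on (0, ∞)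
  have hfint : IntegrableOn f (Set.Ioi (0:ℝ)) := by
    by_contra h
    rw [MeasureTheory.integral_undef h] at hfdens
    exact zero_ne_one hfdens
  have hintOn : ∀ u : ℝ, IntegrableOn f (Set.Ioo (0:ℝ) u) :=
    fun u => hfint.mono_set Set.Ioo_subset_Ioi_self
  -- a globally defined, monotone (hence measurable) version of F
  set Fh : ℝ → ℝ := fun u => ∫ t in Set.Ioo (0:ℝ) u, f t with hFh
  have hmono : Monotone Fh := by
    intro a b hab
    exact setIntegral_mono_set (hintOn b)
      (ae_restrict_of_forall_mem measurableSet_Ioo fun x _ => hfnonneg x)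
      (HasSubset.Subset.eventuallyLE (Set.Ioo_subset_Ioo_right hab))
  have hFhmeas : Measurable Fh := hmono.measurable
  have hFeq : ∀ u : ℝ, 0 < u → F u = Fh u := by
    intro u hu
    rw [hF u, intervalIntegral.integral_of_le hu.le, integral_Ioc_eq_integral_Ioo]
  have hFhpos : ∀ u ∈ Set.Ioo (0:ℝ) τ, 0 < Fh u := by
    intro u hu
    rw [← hFeq u hu.1]; exact hFpos u hu
  -- the ENNReal-valued integrand 1/F
  set g : ℝ → ℝ≥0∞ := fun u => ENNReal.ofReal (1 / Fh u) with hgdef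
  have hg : Measurable g := (measurable_const.div hFhmeas).ennreal_ofReal
  -- inner lintegral
  set H : ℝ → ℝ≥0∞ := fun c => ∫⁻ u in Set.Ioo c τ, g u with hHdef
  have hHanti : Antitone H := fun a b hab =>
    lintegral_mono_set (Set.Ioo_subset_Ioo_left hab)
  have hHmeas : Measurable H := hHanti.measurable
  have hHlt : ∀ c ∈ Set.Ioo (0:ℝ) τ, H c ≠ ⊤ := by
    intro c hc
    have hb : H c ≤ ENNReal.ofReal (1 / Fh c) * volume (Set.Ioo c τ) := by
      rw [← setLIntegral_const]
      refine setLIntegral_mono measurable_const ?_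
      intro u hu
      exact ENNReal.ofReal_le_ofReal
        (one_div_le_one_div_of_le (hFhpos c hc) (hmono hu.1.le))
    exact ne_top_of_le_ne_top
      (ENNReal.mul_ne_top ENNReal.ofReal_ne_top measure_Ioo_lt_top.ne) hb
  -- the Bochner inner integral equals (H c).toReal
  have hG : ∀ c ∈ Set.Ioo (0:ℝ) τ,
      (∫ u in Set.Ioo c τ, 1 / F u) = (H c).toReal := by
    intro c hc
    have h1 : (∫ u in Set.Ioo c τ, 1 / F u) = ∫ u in Set.Ioo c τ, 1 / Fh u :=
      setIntegral_congr_fun measurableSet_Ioo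
        (fun u hu => by rw [hFeq u (lt_trans hc.1 hu.1)])
    rw [h1, integral_eq_lintegral_of_nonneg_ae
      (ae_restrict_of_forall_mem measurableSet_Ioo fun u hu =>
        one_div_nonneg.2 (hFhpos u ⟨lt_trans hc.1 hu.1, hu.2⟩).le)
      (measurable_const.div hFhmeas).aestronglyMeasurable]
  -- the product-space function and Tonelli
  set T : Set (ℝ × ℝ) := {p | 0 < p.1 ∧ p.1 < p.2 ∧ p.2 < τ} with hTdef
  have hT : MeasurableSet T := by
    have : T = {p : ℝ × ℝ | 0 < p.1} ∩ ({p | p.1 < p.2} ∩ {p | p.2 < τ}) := by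
      ext p; simp [hTdef, Set.mem_setOf_eq, and_assoc]
    rw [this]
    exact (measurableSet_lt measurable_const measurable_fst).inter
      ((measurableSet_lt measurable_fst measurable_snd).inter
        (measurableSet_lt measurable_snd measurable_const))
  set φ : ℝ × ℝ → ℝ≥0∞ :=
    fun p => T.indicator (fun q => ENNReal.ofReal (f q.1) * g q.2) p with hφdef
  have hmemT : ∀ p : ℝ × ℝ, p ∈ T ↔ 0 < p.1 ∧ p.1 < p.2 ∧ p.2 < τ := fun p => Iff.rfl
  have hφapp : ∀ p : ℝ × ℝ,
      φ p = T.indicator (fun q => ENNReal.ofReal (f q.1) * g q.2) p := fun p => rfl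
  have hφmeas : Measurable φ :=
    (((hfmeas.comp measurable_fst).ennreal_ofReal).mul (hg.comp measurable_snd)).indicator hT
  have key : (∫⁻ c, ∫⁻ u, φ (c, u)) = ∫⁻ u, ∫⁻ c, φ (c, u) :=
    lintegral_lintegral_swap hφmeas.aemeasurable
  -- LHS of the swap
  have hL : (∫⁻ c, ∫⁻ u, φ (c, u)) =
      ∫⁻ c in Set.Ioo (0:ℝ) τ, ENNReal.ofReal (f c) * H c := by
    rw [← lintegral_indicator measurableSet_Ioo]
    congr 1; funext c
    by_cases hc : c ∈ Set.Ioo (0:ℝ) τ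
    · rw [Set.indicator_of_mem hc]
      have h2 : (fun u => φ (c, u)) =
          (Set.Ioo c τ).indicator (fun u => ENNReal.ofReal (f c) * g u) := by
        funext u
        by_cases hu : u ∈ Set.Ioo c τ
        · rw [Set.indicator_of_mem hu, hφapp]
          exact Set.indicator_of_mem ((hmemT _).2 ⟨hc.1, hu.1, hu.2⟩) _
        · rw [Set.indicator_of_notMem hu, hφapp, Set.indicator_of_notMem]
          intro hmem
          exact hu ⟨((hmemT _).1 hmem).2.1, ((hmemT _).1 hmem).2.2⟩
      rw [h2, lintegral_indicator measurableSet_Ioo,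
        lintegral_const_mul _ hg]
    · rw [Set.indicator_of_notMem hc]
      have h2 : (fun u => φ (c, u)) = fun _ => (0 : ℝ≥0∞) := by
        funext u
        rw [hφapp]
        apply Set.indicator_of_notMem
        intro hmem
        exact hc ⟨((hmemT _).1 hmem).1,
          lt_trans ((hmemT _).1 hmem).2.1 ((hmemT _).1 hmem).2.2⟩
      rw [h2, lintegral_const, zero_mul]
  -- RHS of the swap
  have hR : (∫⁻ u, ∫⁻ c, φ (c, u)) = ENNReal.ofReal τ := by
    have h0 : (∫⁻ u, ∫⁻ c, φ (c, u)) = ∫⁻ u in Set.Ioo (0:ℝ) τ, (1 : ℝ≥0∞) := by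
      rw [← lintegral_indicator measurableSet_Ioo]
      congr 1; funext u
      by_cases hu : u ∈ Set.Ioo (0:ℝ) τ
      · rw [Set.indicator_of_mem hu]
        have h1 : (fun c => φ (c, u)) =
            (Set.Ioo (0:ℝ) u).indicator (fun c => ENNReal.ofReal (f c) * g u) := by
          funext c
          by_cases hcm : c ∈ Set.Ioo (0:ℝ) u
          · rw [Set.indicator_of_mem hcm, hφapp]
            exact Set.indicator_of_mem ((hmemT _).2 ⟨hcm.1, hcm.2, hu.2⟩) _
          · rw [Set.indicator_of_notMem hcm, hφapp, Set.indicator_of_notMem]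
            intro hmem
            exact hcm ⟨((hmemT _).1 hmem).1, ((hmemT _).1 hmem).2.1⟩
        rw [h1, lintegral_indicator measurableSet_Ioo,
          lintegral_mul_const _ hfmeas.ennreal_ofReal]
        have h3 : (∫⁻ c in Set.Ioo (0:ℝ) u, ENNReal.ofReal (f c)) =
            ENNReal.ofReal (Fh u) :=
          (ofReal_integral_eq_lintegral_ofReal (hintOn u)
            (ae_restrict_of_forall_mem measurableSet_Ioo fun x _ => hfnonneg x)).symm
        rw [h3]
        simp only [hgdef]
        rw [← ENNReal.ofReal_mul (hFhpos u hu).le,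
          mul_one_div_cancel (hFhpos u hu).ne', ENNReal.ofReal_one]
      · rw [Set.indicator_of_notMem hu]
        have h1 : (fun c => φ (c, u)) = fun _ => (0 : ℝ≥0∞) := by
          funext c
          rw [hφapp]
          apply Set.indicator_of_notMem
          intro hmem
          exact hu ⟨lt_trans ((hmemT _).1 hmem).1 ((hmemT _).1 hmem).2.1,
            ((hmemT _).1 hmem).2.2⟩
        rw [h1, lintegral_const, zero_mul]
    rw [h0, setLIntegral_one, Real.volume_Ioo, sub_zero]
  have hI : (∫⁻ c in Set.Ioo (0:ℝ) τ, ENNReal.ofReal (f c) * H c) =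
      ENNReal.ofReal τ := by rw [← hL, key, hR]
  -- assemble
  calc ∫ c in Set.Ioo (0:ℝ) τ, (1 / τ) * f c * (∫ u in Set.Ioo c τ, 1 / F u)
      = ∫ c in Set.Ioo (0:ℝ) τ, (1 / τ) * (f c * (H c).toReal) :=
        setIntegral_congr_fun measurableSet_Ioo
          (fun c hc => by rw [hG c hc, mul_assoc])
    _ = (1 / τ) * ∫ c in Set.Ioo (0:ℝ) τ, f c * (H c).toReal :=
        MeasureTheory.integral_const_mul _ _
    _ = (1 / τ) *
        (∫⁻ c in Set.Ioo (0:ℝ) τ, ENNReal.ofReal (f c * (H c).toReal)).toReal := by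
        rw [integral_eq_lintegral_of_nonneg_ae
          (Filter.Eventually.of_forall fun c =>
            mul_nonneg (hfnonneg c) ENNReal.toReal_nonneg)
          (hfmeas.mul hHmeas.ennreal_toReal).aestronglyMeasurable]
    _ = (1 / τ) *
        (∫⁻ c in Set.Ioo (0:ℝ) τ, ENNReal.ofReal (f c) * H c).toReal := by
        congr 1
        apply congrArg
        refine setLIntegral_congr_fun measurableSet_Ioo
          (fun c hc => ?_)
        rw [ENNReal.ofReal_mul (hfnonneg c), ENNReal.ofReal_toReal (hHlt c hc)]
    _ = (1 / τ) * τ := by rw [hI, ENNReal.toReal_ofReal hτ.le]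
    _ = 1 := one_div_mul_cancel hτ.ne'
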